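/- Let V be a real vector space of finite dimension 4 and let e₁, e₂, e₃ ∈ V be linearly independent. The linear map V × V × V → ⋀²V × ⋀²V × ⋀²V defined by (X₁, X₂, X₃) ↦ (e₁∧X₂ − e₂∧X₁, e₁∧X₃ − e₃∧X₁, e₂∧X₃ − e₃∧X₂) is injective. (This is the pointwise statement that the boundary map W_{∂}^{(1,1)} is injective.) -/

import Mathlib

open ExteriorAlgebra

variable {V : Type*} [AddCommGroup V] [Module ℝ V]

/-- The pointwise boundary map `W_{∂}^{(1,1)} : V³ → (⋀²V)³`,
`(X₁,X₂,X₃) ↦ (e₁∧X₂ − e₂∧X₁, e₁∧X₃ − e₃∧X₁, e₂∧X₃ − e₃∧X₂)`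
(valued in the exterior algebra). -/
noncomputable def Wb11 (e₁ e₂ e₃ : V) :
    V × V × V →ₗ[ℝ]
      ExteriorAlgebra ℝ V × ExteriorAlgebra ℝ V × ExteriorAlgebra ℝ V :=
  let p₁ : V × V × V →ₗ[ℝ] ExteriorAlgebra ℝ V :=
    (ι ℝ).comp (LinearMap.fst ℝ V (V × V))
  let p₂ : V × V × V →ₗ[ℝ] ExteriorAlgebra ℝ V :=
    (ι ℝ).comp ((LinearMap.fst ℝ V V).comp (LinearMap.snd ℝ V (V × V)))
  let p₃ : V × V × V →ₗ[ℝ] ExteriorAlgebra ℝ V :=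
    (ι ℝ).comp ((LinearMap.snd ℝ V V).comp (LinearMap.snd ℝ V (V × V)))
  ((LinearMap.mulLeft ℝ (ι ℝ e₁)).comp p₂ - (LinearMap.mulLeft ℝ (ι ℝ e₂)).comp p₁).prod
    (((LinearMap.mulLeft ℝ (ι ℝ e₁)).comp p₃ - (LinearMap.mulLeft ℝ (ι ℝ e₃)).comp p₁).prod
      ((LinearMap.mulLeft ℝ (ι ℝ e₂)).comp p₃ - (LinearMap.mulLeft ℝ (ι ℝ e₃)).comp p₂))

noncomputable def dualWedge (f g : Module.Dual ℝ V) : V [⋀^Fin 2]→ₗ[ℝ] ℝ where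
  toFun v := f (v 0) * g (v 1) - f (v 1) * g (v 0)
  map_update_add' v i x y := by
    fin_cases i <;> simp [Function.update, Fin.ext_iff] <;> ring
  map_update_smul' v i c x := by
    fin_cases i <;> simp [Function.update, Fin.ext_iff] <;> ring
  map_eq_zero_of_eq' v i j hv hij := by
    fin_cases i <;> fin_cases j <;> simp_all <;> ring

@[simp] lemma dualWedge_apply (f g : Module.Dual ℝ V) (a b : V) :
    dualWedge f g ![a, b] = f a * g b - f b * g a := rfl

noncomputable def fam2 (ω : V [⋀^Fin 2]→ₗ[ℝ] ℝ) : ∀ n : ℕ, V [⋀^Fin n]→ₗ[ℝ] ℝ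
  | 2 => ω
  | _ => 0

lemma lift2 (ω : V [⋀^Fin 2]→ₗ[ℝ] ℝ) (a b : V) :
    liftAlternating (fam2 ω) (ι ℝ a * ι ℝ b) = ω ![a, b] := by
  have h : ι ℝ a * ι ℝ b = ιMulti ℝ 2 ![a, b] := by simp [ιMulti_apply]
  rw [h, liftAlternating_apply_ιMulti]; rfl

lemma key (f g : Module.Dual ℝ V) {u v x y : V}
    (h : ι ℝ u * ι ℝ x - ι ℝ v * ι ℝ y = 0) :
    (f u * g x - f x * g u) - (f v * g y - f y * g v) = 0 := by
  have := congrArg (liftAlternating (fam2 (dualWedge f g))) h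
  simpa [map_sub, lift2] using this

/-- For `V` 4-dimensional and `e₁, e₂, e₃` linearly independent, the map
`(X₁,X₂,X₃) ↦ (e₁∧X₂ − e₂∧X₁, e₁∧X₃ − e₃∧X₁, e₂∧X₃ − e₃∧X₂)` from `V³` is injective. -/
theorem Wb11_injective [FiniteDimensional ℝ V]
    (hdim : Module.finrank ℝ V = 4) (e₁ e₂ e₃ : V)
    (hind : LinearIndependent ℝ ![e₁, e₂, e₃]) :
    Function.Injective (Wb11 e₁ e₂ e₃) := by
  classical
  refine (injective_iff_map_eq_zero _).mpr ?_
  rintro ⟨X₁, X₂, X₃⟩ h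
  simp only [Wb11, LinearMap.prod_apply, Function.prod, LinearMap.sub_apply, LinearMap.comp_apply,
    LinearMap.mulLeft_apply, LinearMap.fst_apply, LinearMap.snd_apply, Prod.mk_eq_zero] at h
  obtain ⟨h1, h2, h3⟩ := h
  -- build an extended basis
  have hs : LinearIndepOn ℝ id (Set.range ![e₁, e₂, e₃]) := hind.linearIndepOn_id
  set B := Module.Basis.extend hs with hB
  have he₁ : e₁ ∈ hs.extend (Set.subset_univ _) :=
    hs.subset_extend _ (Set.mem_range.mpr ⟨0, rfl⟩)
  have he₂ : e₂ ∈ hs.extend (Set.subset_univ _) :=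
    hs.subset_extend _ (Set.mem_range.mpr ⟨1, rfl⟩)
  have he₃ : e₃ ∈ hs.extend (Set.subset_univ _) :=
    hs.subset_extend _ (Set.mem_range.mpr ⟨2, rfl⟩)
  set i₁ : hs.extend (Set.subset_univ _) := ⟨e₁, he₁⟩ with hi₁
  set i₂ : hs.extend (Set.subset_univ _) := ⟨e₂, he₂⟩ with hi₂
  set i₃ : hs.extend (Set.subset_univ _) := ⟨e₃, he₃⟩ with hi₃
  have hne : ∀ i j : Fin 3, i ≠ j → ![e₁, e₂, e₃] i ≠ ![e₁, e₂, e₃] j :=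
    fun i j hij => hind.injective.ne hij
  have h12 : i₁ ≠ i₂ := fun hh => hne 0 1 (by decide) (by simpa using congrArg Subtype.val hh)
  have h13 : i₁ ≠ i₃ := fun hh => hne 0 2 (by decide) (by simpa using congrArg Subtype.val hh)
  have h23 : i₂ ≠ i₃ := fun hh => hne 1 2 (by decide) (by simpa using congrArg Subtype.val hh)
  have h21 := h12.symm
  have h31 := h13.symm
  have h32 := h23.symm
  have hc : ∀ p q : hs.extend (Set.subset_univ _), B.coord p (q : V) = if q = p then 1 else 0 := by
    intro p q
    rw [show (q : V) = B q from (Module.Basis.extend_apply_self hs q).symm]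
    simp [Module.Basis.coord_apply, Finsupp.single_apply]
  have hc1 : ∀ p, B.coord p e₁ = if i₁ = p then 1 else 0 := fun p => hc p i₁
  have hc2 : ∀ p, B.coord p e₂ = if i₂ = p then 1 else 0 := fun p => hc p i₂
  have hc3 : ∀ p, B.coord p e₃ = if i₃ = p then 1 else 0 := fun p => hc p i₃
  -- the three "diagonal" equations
  have E1 := key (B.coord i₂) (B.coord i₁) h1
  have E2 := key (B.coord i₃) (B.coord i₁) h2
  have E3 := key (B.coord i₃) (B.coord i₂) h3
  simp [hc1, hc2, hc3, h12, h21, h13, h31, h23, h32] at E1 E2 E3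
  have ha1 : B.repr X₁ i₁ = 0 := by linarith
  have hb2 : B.repr X₂ i₂ = 0 := by linarith
  have hd3 : B.repr X₃ i₃ = 0 := by linarith
  have hX₁ : X₁ = 0 := by
    refine (B.forall_coord_eq_zero_iff).mp fun q => ?_
    rw [Module.Basis.coord_apply]
    by_cases hq1 : q = i₁
    · subst hq1; exact ha1
    by_cases hq2 : q = i₂
    · subst hq2
      have E := key (B.coord i₃) (B.coord i₂) h2
      simp [hc1, hc3, h12, h21, h13, h31, h23, h32] at E
      linarith
    · have E := key (B.coord i₂) (B.coord q) h1
      simp [hc1, hc2, h12, h21, Ne.symm hq1, Ne.symm hq2, hq1, hq2] at E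
      linarith
  have hX₂ : X₂ = 0 := by
    refine (B.forall_coord_eq_zero_iff).mp fun q => ?_
    rw [Module.Basis.coord_apply]
    by_cases hq2 : q = i₂
    · subst hq2; exact hb2
    by_cases hq1 : q = i₁
    · subst hq1
      have E := key (B.coord i₃) (B.coord i₁) h3
      simp [hc2, hc3, h12, h21, h13, h31, h23, h32] at E
      linarith
    · have E := key (B.coord i₁) (B.coord q) h1
      simp [hc1, hc2, h12, h21, Ne.symm hq1, Ne.symm hq2, hq1, hq2] at E
      linarith [ha1]
  have hX₃ : X₃ = 0 := by
    refine (B.forall_coord_eq_zero_iff).mp fun q => ?_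
    rw [Module.Basis.coord_apply]
    by_cases hq3 : q = i₃
    · subst hq3; exact hd3
    by_cases hq1 : q = i₁
    · subst hq1
      have E := key (B.coord i₂) (B.coord i₁) h3
      simp [hc2, hc3, h12, h21, h13, h31, h23, h32] at E
      linarith
    · have E := key (B.coord i₁) (B.coord q) h2
      simp [hc1, hc3, h13, h31, Ne.symm hq1, Ne.symm hq3, hq1, hq3] at E
      linarith [ha1]
  rw [hX₁, hX₂, hX₃]
  rfl
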